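/- Let $A, B$ be $p \times p$ real symmetric positive definite matrices, let $\gamma > 0$, let $q$ be a natural number, and let $A \oplus \gamma I_q$ and $B \oplus \gamma I_q$ denote the $(p+q) \times (p+q)$ block-diagonal matrices with blocks $A$ (resp. $B$) and $\gamma I_q$. Then $\det\big((\tfrac{1}{2}(A \oplus \gamma I_q)^{-1} + \tfrac{1}{2}(B \oplus \gamma I_q)^{-1})^{-1}\big)^{1/2} \big/ \big(\det(A \oplus \gamma I_q)^{1/4}\det(B \oplus \gamma I_q)^{1/4}\big) = \det\big((\tfrac{1}{2}A^{-1} + \tfrac{1}{2}B^{-1})^{-1}\big)^{1/2} \big/ \big(\det(A)^{1/4}\det(B)^{1/4}\big)$. -/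

import Mathlib

open Matrix

/-- The Laplacian graph kernel value between two (positive definite) matrices. -/
noncomputable def lgKernel {k : Type*} [Fintype k] [DecidableEq k]
    (A B : Matrix k k ℝ) : ℝ :=
  (((1 / 2 : ℝ) • A⁻¹ + (1 / 2 : ℝ) • B⁻¹)⁻¹).det ^ ((1 : ℝ) / 2) /
    (A.det ^ ((1 : ℝ) / 4) * B.det ^ ((1 : ℝ) / 4))

lemma posDef_half_add {n : Type*} [Fintype n] {A B : Matrix n n ℝ}
    (hA : A.PosDef) (hB : B.PosDef) :
    ((1/2:ℝ)•A + (1/2:ℝ)•B).PosDef := by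
  constructor
  · rw [Matrix.IsHermitian, conjTranspose_add, conjTranspose_smul, conjTranspose_smul,
      hA.1.eq, hB.1.eq]; norm_num
  · exact ((hA.smul (by norm_num : (0:ℝ) < 1/2)).add (hB.smul (by norm_num : (0:ℝ) < 1/2))).2

lemma inv_fromBlocks_diag {n m : Type*} [Fintype n] [Fintype m] [DecidableEq n] [DecidableEq m]
    {A : Matrix n n ℝ} {D : Matrix m m ℝ} (hA : IsUnit A.det) (hD : IsUnit D.det) :
    (fromBlocks A 0 0 D)⁻¹ = fromBlocks A⁻¹ 0 0 D⁻¹ := by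
  apply inv_eq_right_inv
  rw [fromBlocks_multiply]
  simp [Matrix.mul_nonsing_inv _ hA, Matrix.mul_nonsing_inv _ hD, fromBlocks_one]

lemma inv_smul_one {m : Type*} [Fintype m] [DecidableEq m] {γ : ℝ} (hγ : γ ≠ 0) :
    (γ • (1 : Matrix m m ℝ))⁻¹ = γ⁻¹ • 1 := by
  apply inv_eq_right_inv
  rw [smul_mul_assoc, mul_smul_comm, one_mul, smul_smul, mul_inv_cancel₀ hγ, one_smul]

/-- Appending a common block `γ I_q` to both arguments leaves the
Laplacian graph kernel value unchanged. -/
theorem lg_kernel_direct_sum_gamma_block {p q : ℕ}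
    (A B : Matrix (Fin p) (Fin p) ℝ) (hA : A.PosDef) (hB : B.PosDef)
    (γ : ℝ) (hγ : 0 < γ) :
    lgKernel
        (Matrix.fromBlocks A 0 0 (γ • (1 : Matrix (Fin q) (Fin q) ℝ)))
        (Matrix.fromBlocks B 0 0 (γ • (1 : Matrix (Fin q) (Fin q) ℝ))) =
      lgKernel A B := by
  have hM : ((1/2:ℝ) • A⁻¹ + (1/2:ℝ) • B⁻¹).PosDef := posDef_half_add hA.inv hB.inv
  have hγq : (0:ℝ) < γ ^ q := pow_pos hγ q
  have hdetI : (γ • (1 : Matrix (Fin q) (Fin q) ℝ)).det = γ ^ q := by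
    simp [Matrix.det_smul]
  have hdetI' : (γ⁻¹ • (1 : Matrix (Fin q) (Fin q) ℝ)).det = (γ⁻¹) ^ q := by
    simp [Matrix.det_smul]
  have hIu : IsUnit (γ • (1 : Matrix (Fin q) (Fin q) ℝ)).det := by
    rw [hdetI]; exact hγq.ne'.isUnit
  have hIu' : IsUnit (γ⁻¹ • (1 : Matrix (Fin q) (Fin q) ℝ)).det := by
    rw [hdetI']; exact (pow_pos (inv_pos.2 hγ) q).ne'.isUnit
  have hkey : ((1/2:ℝ) • (fromBlocks A 0 0 (γ • (1 : Matrix (Fin q) (Fin q) ℝ)))⁻¹ +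
      (1/2:ℝ) • (fromBlocks B 0 0 (γ • (1 : Matrix (Fin q) (Fin q) ℝ)))⁻¹)⁻¹ =
      fromBlocks ((1/2:ℝ) • A⁻¹ + (1/2:ℝ) • B⁻¹)⁻¹ 0 0 (γ • 1) := by
    rw [inv_fromBlocks_diag hA.det_pos.ne'.isUnit hIu,
        inv_fromBlocks_diag hB.det_pos.ne'.isUnit hIu,
        inv_smul_one hγ.ne']
    rw [show ∀ X Y : Matrix (Fin p) (Fin p) ℝ,
        (1/2:ℝ) • fromBlocks X 0 0 (γ⁻¹ • (1:Matrix (Fin q) (Fin q) ℝ)) +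
        (1/2:ℝ) • fromBlocks Y 0 0 (γ⁻¹ • (1:Matrix (Fin q) (Fin q) ℝ)) =
        fromBlocks ((1/2:ℝ) • X + (1/2:ℝ) • Y) 0 0 (γ⁻¹ • 1) from by
      intro X Y
      rw [Matrix.fromBlocks_smul, Matrix.fromBlocks_smul, Matrix.fromBlocks_add]
      have hD : (1/2:ℝ) • (γ⁻¹ • (1:Matrix (Fin q) (Fin q) ℝ)) +
          (1/2:ℝ) • (γ⁻¹ • (1:Matrix (Fin q) (Fin q) ℝ)) = γ⁻¹ • 1 := by
        rw [← add_smul]; norm_num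
      rw [hD]; simp]
    rw [inv_fromBlocks_diag hM.det_pos.ne'.isUnit hIu', inv_smul_one (inv_pos.2 hγ).ne',
      inv_inv]
  unfold lgKernel
  rw [hkey, det_fromBlocks_zero₂₁, det_fromBlocks_zero₂₁, det_fromBlocks_zero₂₁, hdetI]
  have hMi : (0:ℝ) < (((1/2:ℝ) • A⁻¹ + (1/2:ℝ) • B⁻¹)⁻¹).det := hM.inv.det_pos
  rw [Real.mul_rpow hMi.le hγq.le, Real.mul_rpow hA.det_pos.le hγq.le,
      Real.mul_rpow hB.det_pos.le hγq.le]
  have hg : (γ ^ q : ℝ) ^ ((1:ℝ)/4) * (γ ^ q : ℝ) ^ ((1:ℝ)/4) = (γ ^ q : ℝ) ^ ((1:ℝ)/2) := by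
    rw [← Real.rpow_add hγq]; norm_num
  have hgne : (γ ^ q : ℝ) ^ ((1:ℝ)/2) ≠ 0 := (Real.rpow_pos_of_pos hγq _).ne'
  rw [show A.det ^ ((1:ℝ)/4) * (γ^q:ℝ) ^ ((1:ℝ)/4) * (B.det ^ ((1:ℝ)/4) * (γ^q:ℝ) ^ ((1:ℝ)/4))
      = A.det ^ ((1:ℝ)/4) * B.det ^ ((1:ℝ)/4) * ((γ^q:ℝ) ^ ((1:ℝ)/2)) from by
    rw [← hg]; ring]
  rw [mul_div_mul_right _ _ hgne]
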